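/- (Theorem, Bonus Case: the radar center and the constructed circle's center are equidistant from the turning point.) Let u and w be unit vectors in EuclideanSpace ℝ (Fin 2), let A be a point, let b, c ≥ 0 with b + c = d, and let L ≥ 0. Set B = A + b • u (the turning point) and C = B + c • w (the entrance point on the second leg). Let O be a point and r ≥ 0 with dist C O = r and dist (C + L • w) O = r (the trajectory's second leg enters the threat circle of center O and radius r at C and travels a distance L inside it). Then there exists a point O′ such that dist (A + d • u) O′ = r, dist (A + (d + L) • u) O′ = r, and dist B O′ = dist B O. (Rotating the trajectory past B about B onto the original direction u shows that B lies on the perpendicular bisector of the segment joining O to the center O′ of the constructed circle, which is tangent to the unturned route with entrance at distance d from A and chord length L.) -/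

import Mathlib

/-- Bonus Case: the bomber starts at `A` in unit direction `u`, turns at
`B = A + b • u` to unit direction `w`, enters the threat circle (center `O`,
radius `r`) at `C = B + c • w` with `b + c = d`, and travels a distance `L`
inside it. Then there is a circle of the same radius `r`, with center `O′`
equidistant from `B` with `O`, tangent data matching the unturned route:
its entrance point is `A + d • u` and the chord there has length `L`. -/
theorem bonus_case_reflected_center (u w : EuclideanSpace ℝ (Fin 2))
    (hu : ‖u‖ = 1) (hw : ‖w‖ = 1) (A : EuclideanSpace ℝ (Fin 2))
    (b c d : ℝ) (hb : 0 ≤ b) (hc : 0 ≤ c) (hbc : b + c = d) (L : ℝ) (hL : 0 ≤ L)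
    (B C : EuclideanSpace ℝ (Fin 2)) (hB : B = A + b • u) (hC : C = B + c • w)
    (O : EuclideanSpace ℝ (Fin 2)) (r : ℝ) (hr : 0 ≤ r)
    (hCO : dist C O = r) (hExit : dist (C + L • w) O = r) :
    ∃ O' : EuclideanSpace ℝ (Fin 2),
      dist (A + d • u) O' = r ∧ dist (A + (d + L) • u) O' = r ∧
      dist B O' = dist B O := by
  set f := Submodule.reflection (ℝ ∙ (w - u))ᗮ with hf
  have hfw : f w = u := Submodule.reflection_sub (by rw [hw, hu])
  refine ⟨B + f (O - B), ?_, ?_, ?_⟩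
  · have h1 : A + d • u = B + f (c • w) := by
      rw [map_smul, hfw, hB, ← hbc, add_smul]; abel
    have h2 : B + f (c • w) - (B + f (O - B)) = f (c • w) - f (O - B) := by abel
    rw [h1, dist_eq_norm, h2, ← map_sub, f.norm_map, ← hCO, hC, dist_eq_norm]
    congr 1; abel
  · have h1 : A + (d + L) • u = B + f ((c + L) • w) := by
      rw [map_smul, hfw, hB, ← hbc]; module
    have h2 : B + f ((c + L) • w) - (B + f (O - B)) = f ((c + L) • w) - f (O - B) := by abel
    rw [h1, dist_eq_norm, h2, ← map_sub, f.norm_map, ← hExit, hC, dist_eq_norm, add_smul]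
    congr 1; abel
  · have h2 : B - (B + f (O - B)) = -(f (O - B)) := by abel
    rw [dist_eq_norm, h2, norm_neg, f.norm_map, dist_eq_norm, norm_sub_rev]
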